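/- For every nonempty Young diagram λ: d_λ = Σ_{j ∈ B⁻(λ)} d_{λ ⊟ j}. (This is the dimension identity corresponding to the branching rule for restriction of irreducible symmetric group modules.) -/

import Mathlib

/-- The content of a cell `(r, c)` (row `r`, column `c`) is `c - r`. -/
def content (x : ℕ × ℕ) : ℤ := (x.2 : ℤ) - (x.1 : ℤ)

/-- `x` is an addable box of the Young diagram `μ`: `x ∉ μ` and `μ ∪ {x}` is again a
Young diagram. -/
def Addable (μ : YoungDiagram) (x : ℕ × ℕ) : Prop :=
  x ∉ μ ∧ IsLowerSet (↑(insert x μ.cells) : Set (ℕ × ℕ))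

/-- `x` is a removable box of the Young diagram `μ`: `x ∈ μ` and `μ ∖ {x}` is again a
Young diagram. -/
def Removable (μ : YoungDiagram) (x : ℕ × ℕ) : Prop :=
  x ∈ μ ∧ IsLowerSet (↑(μ.cells.erase x) : Set (ℕ × ℕ))

/-- `B⁺(μ)`: the set of contents of addable boxes of `μ`. -/
def Bplus (μ : YoungDiagram) : Set ℤ := {i | ∃ x, Addable μ x ∧ content x = i}

/-- `B⁻(μ)`: the set of contents of removable boxes of `μ`. -/
def Bminus (μ : YoungDiagram) : Set ℤ := {i | ∃ x, Removable μ x ∧ content x = i}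

/-- `AddBox l i m` means `m = l ⊞ i`, i.e. `m` is obtained from `l` by adding an addable
box of content `i`. -/
def AddBox (l : YoungDiagram) (i : ℤ) (m : YoungDiagram) : Prop :=
  ∃ x, Addable l x ∧ content x = i ∧ m.cells = insert x l.cells

/-- `RemoveBox l i m` means `m = l ⊟ i`, i.e. `m` is obtained from `l` by removing a
removable box of content `i`. -/
def RemoveBox (l : YoungDiagram) (i : ℤ) (m : YoungDiagram) : Prop :=
  ∃ x, Removable l x ∧ content x = i ∧ m.cells = l.cells.erase x

/-- The hook length `h_μ(r, c)` of a cell of `μ`. -/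
def hookLen (μ : YoungDiagram) (x : ℕ × ℕ) : ℕ :=
  (μ.cells.filter (fun y => (y.1 = x.1 ∧ x.2 ≤ y.2) ∨ (y.2 = x.2 ∧ x.1 ≤ y.1))).card

/-- `d_μ = |μ|! / ∏ hook lengths`, the dimension of the irreducible `ℚS_{|μ|}`-module
indexed by `μ` (hook length formula). -/
def dimPart (μ : YoungDiagram) : ℚ :=
  (Nat.factorial μ.card : ℚ) / ∏ x ∈ μ.cells, (hookLen μ x : ℚ)

open Finset Polynomial

lemma monic_prodXC (t : Finset ℕ) (x : ℕ → ℚ) : (∏ j ∈ t, (X - C (x j))).Monic :=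
  monic_prod_of_monic _ _ fun i _ => monic_X_sub_C (x i)

lemma natDegree_prodXC (t : Finset ℕ) (x : ℕ → ℚ) :
    (∏ j ∈ t, (X - C (x j))).natDegree = t.card := by
  rw [natDegree_prod_of_monic _ _ fun i _ => monic_X_sub_C (x i)]
  simp

lemma coeff_top (t : Finset ℕ) (x : ℕ → ℚ) :
    (∏ j ∈ t, (X - C (x j))).coeff t.card = 1 := by
  have h := (monic_prodXC t x).coeff_natDegree
  rwa [natDegree_prodXC] at h

lemma coeff_sub1 (t : Finset ℕ) (x : ℕ → ℚ) (ht : t.Nonempty) :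
    (∏ j ∈ t, (X - C (x j))).coeff (t.card - 1) = -∑ j ∈ t, x j := by
  induction ht using Finset.Nonempty.cons_induction with
  | singleton a => simp
  | cons a s ha hs ih =>
    have hcs : s.card = (s.card - 1) + 1 := (Nat.succ_pred_eq_of_pos hs.card_pos).symm
    rw [Finset.prod_cons, Finset.card_cons, Finset.sum_cons, Nat.add_sub_cancel, sub_mul,
      coeff_sub, coeff_C_mul, coeff_top, mul_one,
      show (X : ℚ[X]) * ∏ j ∈ s, (X - C (x j)) = (∏ j ∈ s, (X - C (x j))) * X from mul_comm _ _,
      hcs, coeff_mul_X, ih]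
    ring

lemma coeff_sub2 (t : Finset ℕ) (x : ℕ → ℚ) (ht' : t.Nonempty) (ht : 2 ≤ t.card) :
    (∏ j ∈ t, (X - C (x j))).coeff (t.card - 2)
      = ((∑ j ∈ t, x j) ^ 2 - ∑ j ∈ t, (x j) ^ 2) / 2 := by
  induction ht' using Finset.Nonempty.cons_induction with
  | singleton a => simp at ht
  | cons a s ha hs ih =>
    rw [Finset.prod_cons, Finset.card_cons, Finset.sum_cons, Finset.sum_cons,
      show s.card + 1 - 2 = s.card - 1 from by omega, sub_mul,
      show (X : ℚ[X]) * ∏ j ∈ s, (X - C (x j)) = (∏ j ∈ s, (X - C (x j))) * X from mul_comm _ _,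
      coeff_sub, coeff_C_mul]
    rcases eq_or_lt_of_le (show 1 ≤ s.card from hs.card_pos) with h1 | h2
    · obtain ⟨b, rfl⟩ := Finset.card_eq_one.mp h1.symm
      simp only [Finset.prod_singleton, Finset.sum_singleton, Finset.card_singleton,
        Nat.sub_self]
      rw [coeff_zero_eq_eval_zero, coeff_zero_eq_eval_zero]
      simp only [eval_mul, eval_sub, eval_X, eval_C, zero_sub, mul_zero]
      ring
    · have hs2 : 2 ≤ s.card := h2
      have hcs1 : s.card - 1 = (s.card - 2) + 1 := by omega
      rw [hcs1, coeff_mul_X, ih hs2, ← hcs1,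
        show s.card - 1 = s.card - 1 from rfl, coeff_sub1 s x hs]
      ring

lemma lagrange_coeff_sum (s : Finset ℕ) (v : ℕ → ℚ) (hv : Set.InjOn v s)
    (P : ℚ[X]) (hP : P.degree < s.card) :
    ∑ i ∈ s, P.eval (v i) * (∏ j ∈ s.erase i, (v i - v j))⁻¹ = P.coeff (s.card - 1) := by
  conv_rhs => rw [Lagrange.eq_interpolate hv hP]
  rw [Lagrange.interpolate_apply, finset_sum_coeff]
  refine Finset.sum_congr rfl fun i hi => ?_
  rw [coeff_C_mul]
  congr 1
  have hbasis : Lagrange.basis s v i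
      = C (∏ j ∈ s.erase i, (v i - v j)⁻¹) * ∏ j ∈ s.erase i, (X - C (v j)) := by
    rw [Lagrange.basis]
    unfold Lagrange.basisDivisor
    rw [Finset.prod_mul_distrib, map_prod]
  rw [hbasis, coeff_C_mul]
  have hQ : (∏ j ∈ s.erase i, (X - C (v j))).coeff (s.card - 1) = 1 := by
    have := coeff_top (s.erase i) v
    rwa [Finset.card_erase_of_mem hi] at this
  rw [hQ, mul_one, ← Finset.prod_inv_distrib]

lemma key_identity (m : ℕ) (x : ℕ → ℚ) (hx : Set.InjOn x (Finset.range m)) :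
    ∑ k ∈ Finset.range m, x k * ∏ j ∈ (Finset.range m).erase k,
        ((x k - x j - 1) / (x k - x j))
      = (∑ k ∈ Finset.range m, x k) - m * (m - 1) / 2 := by
  rcases Nat.lt_or_ge m 2 with hm | hm2
  · interval_cases m <;> simp
  set s : Finset ℕ := Finset.range m with hs
  have hcard : s.card = m := Finset.card_range m
  have hne : s.Nonempty := by rw [hs]; exact Finset.nonempty_range_iff.mpr (by omega)
  set D : ℚ[X] := ∏ j ∈ s, (X - C (x j)) with hD
  set N : ℚ[X] := ∏ j ∈ s, (X - C (x j + 1)) with hN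
  have hDmonic : D.Monic := monic_prodXC s x
  have hNmonic : N.Monic := monic_prodXC s (fun j => x j + 1)
  have hDdeg : D.degree = (m : WithBot ℕ) := by
    rw [degree_eq_natDegree hDmonic.ne_zero, natDegree_prodXC, hcard]
  have hNdeg : N.degree = (m : WithBot ℕ) := by
    rw [degree_eq_natDegree hNmonic.ne_zero, natDegree_prodXC, hcard]
  have hNDdeg : (N - D).degree < (m : WithBot ℕ) := by
    rw [← hNdeg]
    exact degree_sub_lt (by rw [hNdeg, hDdeg]) hNmonic.ne_zero
      (by rw [hNmonic.leadingCoeff, hDmonic.leadingCoeff])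
  -- coefficient computations
  have hsum1 : ∑ j ∈ s, (x j + 1) = (∑ j ∈ s, x j) + m := by
    rw [Finset.sum_add_distrib]; simp [hcard]
  have hsum2 : ∑ j ∈ s, (x j + 1) ^ 2 = (∑ j ∈ s, (x j)^2) + 2 * (∑ j ∈ s, x j) + m := by
    have : ∀ j ∈ s, (x j + 1)^2 = (x j)^2 + 2 * x j + 1 := fun j _ => by ring
    rw [Finset.sum_congr rfl this, Finset.sum_add_distrib, Finset.sum_add_distrib,
      Finset.mul_sum]
    simp [hcard, Finset.mul_sum]
  have hDc1 : D.coeff (m - 1) = -∑ j ∈ s, x j := by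
    have := coeff_sub1 s x hne; rwa [hcard] at this
  have hNc1 : N.coeff (m - 1) = -((∑ j ∈ s, x j) + m) := by
    have := coeff_sub1 s (fun j => x j + 1) hne; rw [hcard] at this; rw [this, hsum1]
  have hDc2 : D.coeff (m - 2) = ((∑ j ∈ s, x j) ^ 2 - ∑ j ∈ s, (x j) ^ 2) / 2 := by
    have := coeff_sub2 s x hne (by rw [hcard]; omega); rwa [hcard] at this
  have hNc2 : N.coeff (m - 2)
      = (((∑ j ∈ s, x j) + m) ^ 2 - ((∑ j ∈ s, (x j)^2) + 2 * (∑ j ∈ s, x j) + m)) / 2 := by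
    have := coeff_sub2 s (fun j => x j + 1) hne (by rw [hcard]; omega)
    rw [hcard] at this; rw [this, hsum1, hsum2]
  have hDtop : D.coeff m = 1 := by have := coeff_top s x; rwa [hcard] at this
  -- evaluations
  have hDeval : ∀ i ∈ s, D.eval (x i) = 0 := fun i hi => by
    rw [hD, eval_prod]
    exact Finset.prod_eq_zero hi (by simp)
  have hNeval : ∀ i ∈ s, N.eval (x i) = -∏ j ∈ s.erase i, (x i - x j - 1) := by
    intro i hi
    rw [hN, eval_prod]
    simp only [eval_sub, eval_X, eval_C]
    rw [← Finset.mul_prod_erase s (fun j => x i - (x j + 1)) hi,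
      show x i - (x i + 1) = -1 by ring, neg_one_mul]
    exact neg_inj.mpr (Finset.prod_congr rfl fun j _ => by ring)
  -- first application (not strictly needed but gives coeff x also fine) skip
  -- second polynomial
  set P2 : ℚ[X] := X * (N - D) + C (m : ℚ) * D with hP2
  have hP2deg : P2.degree < (s.card : WithBot ℕ) := by
    rw [hcard]
    rw [Polynomial.degree_lt_iff_coeff_zero]
    intro k hk
    have hk' : (m : WithBot ℕ) ≤ k := by exact_mod_cast hk
    have hkm : m ≤ k := by exact_mod_cast hk'
    have hk1 : k = (k - 1) + 1 := by omega
    rw [hP2, coeff_add, hk1, coeff_X_mul, coeff_C_mul]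
    rcases eq_or_lt_of_le hkm with he | hlt
    · have e1 : (N - D).coeff (k - 1) = -m := by
        rw [show k - 1 = m - 1 from by omega, coeff_sub, hNc1, hDc1]; ring
      have e2 : D.coeff (k - 1 + 1) = 1 := by
        rw [show k - 1 + 1 = m from by omega]; exact hDtop
      rw [e1, e2]
      ring
    · have h1 : (N - D).coeff (k - 1) = 0 := by
        apply coeff_eq_zero_of_degree_lt
        refine lt_of_lt_of_le hNDdeg ?_
        exact_mod_cast (show m ≤ k - 1 by omega)
      have h2 : D.coeff (k - 1 + 1) = 0 := by
        apply coeff_eq_zero_of_degree_lt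
        rw [hDdeg]
        exact_mod_cast (show m < k - 1 + 1 by omega)
      rw [h1, h2]; ring
  have happ := lagrange_coeff_sum s x hx P2 hP2deg
  -- LHS of happ
  have hlhs : ∑ i ∈ s, P2.eval (x i) * (∏ j ∈ s.erase i, (x i - x j))⁻¹
      = -∑ i ∈ s, x i * ∏ j ∈ s.erase i, ((x i - x j - 1) / (x i - x j)) := by
    rw [← Finset.sum_neg_distrib]
    refine Finset.sum_congr rfl fun i hi => ?_
    rw [hP2]
    simp only [eval_add, eval_mul, eval_X, eval_C, eval_sub]
    rw [hDeval i hi, hNeval i hi]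
    rw [Finset.prod_div_distrib]
    field_simp
    ring
  -- RHS of happ
  have hrhs : P2.coeff (s.card - 1) = -((∑ k ∈ s, x k) - m * (m-1) / 2) := by
    rw [hcard, hP2, coeff_add, coeff_C_mul,
      show m - 1 = (m - 2) + 1 from by omega, coeff_X_mul, ← show m - 1 = (m-2)+1 from by omega,
      coeff_sub, hNc2, hDc2, hDc1]
    push_cast
    ring
  rw [hlhs, hrhs] at happ
  have := neg_injective happ
  exact this

def VG (x : ℕ → ℚ) (M : ℕ) : ℚ := ∏ i ∈ Finset.range M, ∏ j ∈ Finset.Ico (i + 1) M, (x i - x j)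

def PG (f : ℕ → ℕ) (M : ℕ) : ℚ := ∏ i ∈ Finset.range M, (Nat.factorial (f i) : ℚ)

lemma VG_congr {x y : ℕ → ℚ} {M : ℕ} (h : ∀ i < M, x i = y i) : VG x M = VG y M := by
  unfold VG
  refine Finset.prod_congr rfl fun i hi => Finset.prod_congr rfl fun j hj => ?_
  rw [Finset.mem_range] at hi
  rw [Finset.mem_Ico] at hj
  rw [h i hi, h j hj.2]

lemma PG_congr {f g : ℕ → ℕ} {M : ℕ} (h : ∀ i < M, f i = g i) : PG f M = PG g M := by
  unfold PG
  exact Finset.prod_congr rfl fun i hi => by rw [h i (Finset.mem_range.mp hi)]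

lemma erase_range_split (M k : ℕ) (hk : k < M) :
    (Finset.range M).erase k = Finset.range k ∪ Finset.Ico (k + 1) M := by
  ext i
  simp only [Finset.mem_erase, Finset.mem_range, Finset.mem_union, Finset.mem_Ico]
  omega

lemma VG_split (x : ℕ → ℚ) (M k : ℕ) (hk : k < M) :
    VG x M = ((-1 : ℚ) ^ k * ∏ j ∈ (Finset.range M).erase k, (x k - x j)) *
      ∏ i ∈ (Finset.range M).erase k, ∏ j ∈ (Finset.Ico (i + 1) M).erase k, (x i - x j) := by
  have hkmem : k ∈ Finset.range M := Finset.mem_range.mpr hk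
  rw [VG, ← Finset.mul_prod_erase _ _ hkmem]
  have hstep : ∀ i ∈ (Finset.range M).erase k,
      (∏ j ∈ Finset.Ico (i + 1) M, (x i - x j))
        = (if i < k then (x i - x k) else 1) * ∏ j ∈ (Finset.Ico (i + 1) M).erase k,
            (x i - x j) := by
    intro i hi
    rw [Finset.mem_erase, Finset.mem_range] at hi
    by_cases hik : i < k
    · rw [if_pos hik]
      exact (Finset.mul_prod_erase _ (fun j => x i - x j)
        (Finset.mem_Ico.mpr ⟨by omega, by omega⟩)).symm
    · rw [if_neg hik, one_mul, Finset.erase_eq_of_notMem]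
      rw [Finset.mem_Ico]
      omega
  rw [Finset.prod_congr rfl hstep, Finset.prod_mul_distrib]
  have hfilter : ∏ i ∈ (Finset.range M).erase k, (if i < k then (x i - x k) else 1)
      = ∏ i ∈ Finset.range k, (x i - x k) := by
    rw [← Finset.prod_filter]
    apply Finset.prod_congr _ fun _ _ => rfl
    ext i
    simp only [Finset.mem_filter, Finset.mem_erase, Finset.mem_range]
    omega
  rw [hfilter]
  have hneg : ∏ i ∈ Finset.range k, (x i - x k) = (-1 : ℚ)^k * ∏ i ∈ Finset.range k,
      (x k - x i) := by
    calc ∏ i ∈ Finset.range k, (x i - x k)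
        = ∏ i ∈ Finset.range k, (-1 : ℚ) * (x k - x i) :=
          Finset.prod_congr rfl fun i _ => by ring
      _ = (∏ _i ∈ Finset.range k, (-1 : ℚ)) * ∏ i ∈ Finset.range k, (x k - x i) :=
          Finset.prod_mul_distrib
      _ = (-1 : ℚ)^k * ∏ i ∈ Finset.range k, (x k - x i) := by
          rw [Finset.prod_const, Finset.card_range]
  have hW : ∏ j ∈ (Finset.range M).erase k, (x k - x j)
      = (∏ i ∈ Finset.range k, (x k - x i)) * ∏ j ∈ Finset.Ico (k+1) M, (x k - x j) := by
    rw [erase_range_split M k hk, Finset.prod_union]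
    rw [Finset.disjoint_left]
    intro a ha ha'
    rw [Finset.mem_range] at ha
    rw [Finset.mem_Ico] at ha'
    omega
  rw [hneg, hW]
  ring

lemma VG_update (x : ℕ → ℚ) (M k : ℕ) (hk : k < M) :
    VG (Function.update x k (x k - 1)) M * ∏ j ∈ (Finset.range M).erase k, (x k - x j)
      = VG x M * ∏ j ∈ (Finset.range M).erase k, (x k - x j - 1) := by
  set y := Function.update x k (x k - 1) with hy
  have hyk : y k = x k - 1 := Function.update_self k _ x
  have hyj : ∀ j, j ≠ k → y j = x j := fun j hj => Function.update_of_ne hj _ x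
  have hT : ∏ i ∈ (Finset.range M).erase k, ∏ j ∈ (Finset.Ico (i + 1) M).erase k, (y i - y j)
      = ∏ i ∈ (Finset.range M).erase k, ∏ j ∈ (Finset.Ico (i + 1) M).erase k, (x i - x j) := by
    refine Finset.prod_congr rfl fun i hi => Finset.prod_congr rfl fun j hj => ?_
    rw [hyj i (Finset.mem_erase.mp hi).1, hyj j (Finset.mem_erase.mp hj).1]
  have hWy : ∏ j ∈ (Finset.range M).erase k, (y k - y j)
      = ∏ j ∈ (Finset.range M).erase k, (x k - x j - 1) := by
    refine Finset.prod_congr rfl fun j hj => ?_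
    rw [hyk, hyj j (Finset.mem_erase.mp hj).1]
    ring
  rw [VG_split x M k hk, VG_split y M k hk, hT, hWy]
  ring

lemma VG_eq_zero (x : ℕ → ℚ) (M i j : ℕ) (hij : i < j) (hj : j < M) (h : x i = x j) :
    VG x M = 0 := by
  rw [VG]
  apply Finset.prod_eq_zero (Finset.mem_range.mpr (lt_trans hij hj))
  apply Finset.prod_eq_zero (Finset.mem_Ico.mpr ⟨hij, hj⟩)
  rw [h, sub_self]

lemma key_identity_VG (m : ℕ) (x : ℕ → ℚ) (hx : Set.InjOn x (Finset.range m)) :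
    ∑ k ∈ Finset.range m, x k * VG (Function.update x k (x k - 1)) m
      = ((∑ k ∈ Finset.range m, x k) - m * (m - 1) / 2) * VG x m := by
  have hW : ∀ k ∈ Finset.range m, ∏ j ∈ (Finset.range m).erase k, (x k - x j) ≠ 0 := by
    intro k hk
    apply Finset.prod_ne_zero_iff.mpr
    intro j hj
    have hjk := (Finset.mem_erase.mp hj).1
    have hjm := (Finset.mem_erase.mp hj).2
    exact sub_ne_zero_of_ne fun hxx => hjk (hx hjm hk hxx.symm)
  have step : ∀ k ∈ Finset.range m, x k * VG (Function.update x k (x k - 1)) m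
      = VG x m * (x k * ∏ j ∈ (Finset.range m).erase k, ((x k - x j - 1) / (x k - x j))) := by
    intro k hk
    have hu := VG_update x m k (Finset.mem_range.mp hk)
    have hW' := hW k hk
    have : VG (Function.update x k (x k - 1)) m
        = VG x m * (∏ j ∈ (Finset.range m).erase k, (x k - x j - 1)) /
            (∏ j ∈ (Finset.range m).erase k, (x k - x j)) := by
      field_simp
      linear_combination hu
    rw [this, Finset.prod_div_distrib]
    field_simp
  rw [Finset.sum_congr rfl step, ← Finset.mul_sum, key_identity m x hx]
  ring

def bfun (μ : YoungDiagram) (M i : ℕ) : ℕ := μ.rowLen i + (M - 1 - i)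

def xq (μ : YoungDiagram) (M : ℕ) : ℕ → ℚ := fun i => (bfun μ M i : ℚ)

lemma rowLen_pos {μ : YoungDiagram} {i : ℕ} (h : i < μ.colLen 0) : 0 < μ.rowLen i := by
  have : (i, 0) ∈ μ := YoungDiagram.mem_iff_lt_colLen.mpr h
  have := YoungDiagram.mem_iff_lt_rowLen.mp this
  omega

lemma rowLen_zero_of_le {μ : YoungDiagram} {i : ℕ} (h : μ.colLen 0 ≤ i) : μ.rowLen i = 0 := by
  by_contra hne
  have : (i, 0) ∈ μ := YoungDiagram.mem_iff_lt_rowLen.mpr (by omega)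
  have := YoungDiagram.mem_iff_lt_colLen.mp this
  omega

lemma bfun_strictAnti {μ : YoungDiagram} {M i j : ℕ} (hij : i < j) (hj : j < M) :
    bfun μ M j < bfun μ M i := by
  have := μ.rowLen_anti i j (le_of_lt hij)
  unfold bfun
  omega

lemma hookLen_eq {μ : YoungDiagram} {r c : ℕ} (h : (r, c) ∈ μ) :
    hookLen μ (r, c) = (μ.rowLen r - c) + (μ.colLen c - (r + 1)) := by
  have hrc : c < μ.rowLen r := YoungDiagram.mem_iff_lt_rowLen.mp h
  have hcc : r < μ.colLen c := YoungDiagram.mem_iff_lt_colLen.mp h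
  unfold hookLen
  have hsplit : (μ.cells.filter
      (fun y => (y.1 = (r,c).1 ∧ (r,c).2 ≤ y.2) ∨ (y.2 = (r,c).2 ∧ (r,c).1 ≤ y.1)))
      = (μ.cells.filter (fun y => y.1 = r ∧ c ≤ y.2)) ∪
        (μ.cells.filter (fun y => y.2 = c ∧ r ≤ y.1)) := by
    rw [← Finset.filter_or]
  have hA : (μ.cells.filter (fun y => y.1 = r ∧ c ≤ y.2))
      = (Finset.Ico c (μ.rowLen r)).image (fun j => (r, j)) := by
    ext ⟨a, b⟩
    simp only [Finset.mem_filter, Finset.mem_image, Finset.mem_Ico, YoungDiagram.mem_cells,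
      Prod.mk.injEq]
    constructor
    · rintro ⟨hmem, rfl, hcb⟩
      exact ⟨b, ⟨hcb, YoungDiagram.mem_iff_lt_rowLen.mp hmem⟩, rfl, rfl⟩
    · rintro ⟨j, ⟨hcj, hjr⟩, rfl, rfl⟩
      exact ⟨YoungDiagram.mem_iff_lt_rowLen.mpr hjr, rfl, hcj⟩
  have hB : (μ.cells.filter (fun y => y.2 = c ∧ r ≤ y.1))
      = (Finset.Ico r (μ.colLen c)).image (fun i => (i, c)) := by
    ext ⟨a, b⟩
    simp only [Finset.mem_filter, Finset.mem_image, Finset.mem_Ico, YoungDiagram.mem_cells,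
      Prod.mk.injEq]
    constructor
    · rintro ⟨hmem, rfl, hra⟩
      exact ⟨a, ⟨hra, YoungDiagram.mem_iff_lt_colLen.mp hmem⟩, rfl, rfl⟩
    · rintro ⟨i, ⟨hri, hic⟩, rfl, rfl⟩
      exact ⟨YoungDiagram.mem_iff_lt_colLen.mpr hic, rfl, hri⟩
  have hInter : (μ.cells.filter (fun y => y.1 = r ∧ c ≤ y.2)) ∩
      (μ.cells.filter (fun y => y.2 = c ∧ r ≤ y.1)) = {(r, c)} := by
    ext ⟨a, b⟩
    simp only [Finset.mem_inter, Finset.mem_filter, Finset.mem_singleton, Prod.mk.injEq,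
      YoungDiagram.mem_cells]
    constructor
    · rintro ⟨⟨_, rfl, hcb⟩, _, rfl, _⟩
      exact ⟨rfl, rfl⟩
    · rintro ⟨rfl, rfl⟩
      exact ⟨⟨h, rfl, le_refl _⟩, h, rfl, le_refl _⟩
  have hcardA : (μ.cells.filter (fun y => y.1 = r ∧ c ≤ y.2)).card = μ.rowLen r - c := by
    rw [hA, Finset.card_image_of_injective _ (fun a b hab => by simpa using hab),
      Nat.card_Ico]
  have hcardB : (μ.cells.filter (fun y => y.2 = c ∧ r ≤ y.1)).card = μ.colLen c - r := by
    rw [hB, Finset.card_image_of_injective _ (fun a b hab => by simpa using hab),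
      Nat.card_Ico]
  have := Finset.card_union_add_card_inter
    (μ.cells.filter (fun y => y.1 = r ∧ c ≤ y.2))
    (μ.cells.filter (fun y => y.2 = c ∧ r ≤ y.1))
  rw [hInter, Finset.card_singleton, hcardA, hcardB] at this
  rw [hsplit]
  omega

lemma cells_eq_biUnion (μ : YoungDiagram) :
    μ.cells = (Finset.range (μ.colLen 0)).biUnion
      (fun r => {r} ×ˢ Finset.range (μ.rowLen r)) := by
  ext ⟨a, b⟩
  simp only [Finset.mem_biUnion, Finset.mem_range, Finset.mem_product, Finset.mem_singleton,
    YoungDiagram.mem_cells]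
  constructor
  · intro h
    refine ⟨a, ?_, rfl, YoungDiagram.mem_iff_lt_rowLen.mp h⟩
    exact YoungDiagram.mem_iff_lt_colLen.mp (μ.up_left_mem (le_refl a) (Nat.zero_le b) h)
  · rintro ⟨r, _, rfl, hb⟩
    exact YoungDiagram.mem_iff_lt_rowLen.mpr hb

lemma pairwise_disj (μ : YoungDiagram) : (↑(Finset.range (μ.colLen 0)) : Set ℕ).PairwiseDisjoint
    (fun r => {r} ×ˢ Finset.range (μ.rowLen r)) := by
  intro a _ b _ hab
  simp only [Function.onFun]
  rw [Finset.disjoint_left]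
  rintro ⟨p, q⟩ hp hq
  simp only [Finset.mem_product, Finset.mem_singleton] at hp hq
  exact hab (hp.1.symm.trans hq.1)

lemma prod_cells {β : Type*} [CommMonoid β] (μ : YoungDiagram) (f : ℕ × ℕ → β) :
    ∏ x ∈ μ.cells, f x
      = ∏ r ∈ Finset.range (μ.colLen 0), ∏ j ∈ Finset.range (μ.rowLen r), f (r, j) := by
  rw [cells_eq_biUnion, Finset.prod_biUnion (pairwise_disj μ)]
  refine Finset.prod_congr rfl fun r _ => ?_
  rw [Finset.singleton_product, Finset.prod_map]
  rfl

lemma card_eq_sum_rowLen (μ : YoungDiagram) :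
    μ.card = ∑ r ∈ Finset.range (μ.colLen 0), μ.rowLen r := by
  have : μ.card = μ.cells.card := rfl
  rw [this, cells_eq_biUnion, Finset.card_biUnion (fun a ha b hb hab =>
    pairwise_disj μ ha hb hab)]
  refine Finset.sum_congr rfl fun r _ => ?_
  rw [Finset.card_product, Finset.card_singleton, Finset.card_range, one_mul]

lemma hookLen_pos {μ : YoungDiagram} {x : ℕ × ℕ} (h : x ∈ μ) : 0 < hookLen μ x := by
  obtain ⟨r, c⟩ := x
  rw [hookLen_eq h]
  have := YoungDiagram.mem_iff_lt_rowLen.mp h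
  omega

lemma row_prod (μ : YoungDiagram) (r : ℕ) (hr : r < μ.colLen 0) :
    (∏ j ∈ Finset.range (μ.rowLen r), hookLen μ (r, j)) *
      ∏ i ∈ Finset.Ico (r + 1) (μ.colLen 0), (bfun μ (μ.colLen 0) r - bfun μ (μ.colLen 0) i)
      = Nat.factorial (bfun μ (μ.colLen 0) r) := by
  set m := μ.colLen 0 with hm
  set R := μ.rowLen r with hR
  have hRpos : 0 < R := rowLen_pos hr
  set u : ℕ → ℕ := fun j => hookLen μ (r, j) with hu
  set v : ℕ → ℕ := fun i => bfun μ m r - bfun μ m i with hv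
  have hbr : bfun μ m r = R + (m - 1 - r) := rfl
  -- facts about u
  have hueq : ∀ j < R, u j = (R - j) + (μ.colLen j - (r + 1)) := by
    intro j hj
    exact hookLen_eq (YoungDiagram.mem_iff_lt_rowLen.mpr hj)
  have hcolle : ∀ j, μ.colLen j ≤ m := fun j => μ.colLen_anti 0 j (Nat.zero_le j)
  have hcolgt : ∀ j < R, r < μ.colLen j := fun j hj =>
    YoungDiagram.mem_iff_lt_colLen.mp (YoungDiagram.mem_iff_lt_rowLen.mpr hj)
  have huinj : Set.InjOn u (Finset.range R) := by
    intro j1 h1 j2 h2 hval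
    rw [Finset.coe_range, Set.mem_Iio] at h1 h2
    rcases Nat.lt_trichotomy j1 j2 with hlt | he | hgt
    · have hc := μ.colLen_anti j1 j2 (le_of_lt hlt)
      have := hueq j1 h1; have := hueq j2 h2
      have := hcolgt j2 h2
      omega
    · exact he
    · have hc := μ.colLen_anti j2 j1 (le_of_lt hgt)
      have := hueq j1 h1; have := hueq j2 h2
      have := hcolgt j1 h1
      omega
  have hvinj : Set.InjOn v (Finset.Ico (r+1) m) := by
    intro i1 h1 i2 h2 hval
    rw [Finset.coe_Ico, Set.mem_Ico] at h1 h2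
    rcases Nat.lt_trichotomy i1 i2 with hlt | he | hgt
    · have b1 := bfun_strictAnti (μ := μ) (M := m) hlt h2.2
      have b2 := bfun_strictAnti (μ := μ) (M := m) (show r < i1 by omega) (by omega)
      have b3 := bfun_strictAnti (μ := μ) (M := m) (show r < i2 by omega) h2.2
      simp only [hv] at hval
      omega
    · exact he
    · have b1 := bfun_strictAnti (μ := μ) (M := m) hgt h1.2
      have b2 := bfun_strictAnti (μ := μ) (M := m) (show r < i1 by omega) h1.2
      have b3 := bfun_strictAnti (μ := μ) (M := m) (show r < i2 by omega) (by omega)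
      simp only [hv] at hval
      omega
  -- images
  set A := (Finset.range R).image u with hA
  set B := (Finset.Ico (r+1) m).image v with hB
  have hAsub : A ⊆ Finset.Icc 1 (bfun μ m r) := by
    intro t ht
    rw [hA, Finset.mem_image] at ht
    obtain ⟨j, hj, rfl⟩ := ht
    rw [Finset.mem_range] at hj
    have := hueq j hj
    have := hcolle j
    have := hcolgt j hj
    rw [Finset.mem_Icc]
    omega
  have hBsub : B ⊆ Finset.Icc 1 (bfun μ m r) := by
    intro t ht
    rw [hB, Finset.mem_image] at ht
    obtain ⟨i, hi, rfl⟩ := ht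
    rw [Finset.mem_Ico] at hi
    have := bfun_strictAnti (μ := μ) (M := m) (show r < i by omega) hi.2
    rw [Finset.mem_Icc]
    simp only [hv]
    omega
  have hdisj : Disjoint A B := by
    rw [Finset.disjoint_left]
    intro t htA htB
    rw [hA, Finset.mem_image] at htA
    rw [hB, Finset.mem_image] at htB
    obtain ⟨j, hj, hjt⟩ := htA
    obtain ⟨i, hi, hit⟩ := htB
    rw [Finset.mem_range] at hj
    rw [Finset.mem_Ico] at hi
    have h1 := hueq j hj
    have h2 := hcolle j
    have h3 := hcolgt j hj
    have hbi : bfun μ m i = μ.rowLen i + (m - 1 - i) := rfl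
    have hrowle : μ.rowLen i ≤ R := by rw [hR]; exact μ.rowLen_anti r i (by omega)
    have hbb := bfun_strictAnti (μ := μ) (M := m) (show r < i by omega) hi.2
    by_cases hmem : (i, j) ∈ μ
    · have e1 : j < μ.rowLen i := YoungDiagram.mem_iff_lt_rowLen.mp hmem
      have e2 : i < μ.colLen j := YoungDiagram.mem_iff_lt_colLen.mp hmem
      simp only [hv] at hit
      omega
    · have e1 : μ.rowLen i ≤ j := by
        by_contra hc
        exact hmem (YoungDiagram.mem_iff_lt_rowLen.mpr (by omega))
      have e2 : μ.colLen j ≤ i := by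
        by_contra hc
        exact hmem (YoungDiagram.mem_iff_lt_colLen.mpr (by omega))
      simp only [hv] at hit
      omega
  have hcardA : A.card = R := by
    rw [hA, Finset.card_image_of_injOn huinj, Finset.card_range]
  have hcardB : B.card = m - (r + 1) := by
    rw [hB, Finset.card_image_of_injOn hvinj, Nat.card_Ico]
  have hunion : A ∪ B = Finset.Icc 1 (bfun μ m r) := by
    apply Finset.eq_of_subset_of_card_le (Finset.union_subset hAsub hBsub)
    rw [Finset.card_union_of_disjoint hdisj, hcardA, hcardB, Nat.card_Icc]
    omega
  have hprod : ∏ t ∈ Finset.Icc 1 (bfun μ m r), t = Nat.factorial (bfun μ m r) := by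
    have : Finset.Icc 1 (bfun μ m r) = Finset.Ico 1 (bfun μ m r + 1) := by
      rw [Finset.Ico_add_one_right_eq_Icc]
    rw [this, Finset.prod_Ico_id_eq_factorial]
  rw [← hprod, ← hunion, Finset.prod_union hdisj, hA, hB,
    Finset.prod_image huinj, Finset.prod_image hvinj]

lemma PG_ne_zero (f : ℕ → ℕ) (M : ℕ) : PG f M ≠ 0 := by
  unfold PG
  apply Finset.prod_ne_zero_iff.mpr
  intro i _
  exact_mod_cast Nat.factorial_ne_zero (f i)

lemma VG_xq_ne_zero (μ : YoungDiagram) (M : ℕ) : VG (xq μ M) M ≠ 0 := by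
  unfold VG
  apply Finset.prod_ne_zero_iff.mpr
  intro i hi
  apply Finset.prod_ne_zero_iff.mpr
  intro j hj
  rw [Finset.mem_Ico] at hj
  have := bfun_strictAnti (μ := μ) (M := M) (show i < j by omega) hj.2
  have hji : (bfun μ M j : ℚ) < bfun μ M i := by exact_mod_cast this
  unfold xq
  exact sub_ne_zero_of_ne (by exact_mod_cast ne_of_gt hji)

lemma hooks_VG (μ : YoungDiagram) :
    (∏ x ∈ μ.cells, (hookLen μ x : ℚ)) * VG (xq μ (μ.colLen 0)) (μ.colLen 0)
      = PG (bfun μ (μ.colLen 0)) (μ.colLen 0) := by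
  set m := μ.colLen 0 with hm
  have hnat : (∏ x ∈ μ.cells, hookLen μ x) *
      (∏ r ∈ Finset.range m, ∏ i ∈ Finset.Ico (r+1) m, (bfun μ m r - bfun μ m i))
      = ∏ r ∈ Finset.range m, Nat.factorial (bfun μ m r) := by
    rw [prod_cells μ (hookLen μ), ← Finset.prod_mul_distrib]
    exact Finset.prod_congr rfl fun r hr => row_prod μ r (Finset.mem_range.mp hr)
  have hVG : VG (xq μ m) m = ((∏ r ∈ Finset.range m, ∏ i ∈ Finset.Ico (r+1) m,
      (bfun μ m r - bfun μ m i) : ℕ) : ℚ) := by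
    rw [Nat.cast_prod]
    refine Finset.prod_congr rfl fun r hr => ?_
    rw [Nat.cast_prod]
    refine Finset.prod_congr rfl fun i hi => ?_
    rw [Finset.mem_Ico] at hi
    have := bfun_strictAnti (μ := μ) (M := m) (show r < i by omega) hi.2
    rw [Nat.cast_sub (le_of_lt this)]
    rfl
  have hHq : (∏ x ∈ μ.cells, (hookLen μ x : ℚ)) = ((∏ x ∈ μ.cells, hookLen μ x : ℕ) : ℚ) := by
    rw [Nat.cast_prod]
  rw [hVG, hHq, ← Nat.cast_mul, hnat]
  unfold PG
  rw [Nat.cast_prod]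

lemma dimPart_eq_base (μ : YoungDiagram) :
    dimPart μ = (Nat.factorial μ.card : ℚ) * VG (xq μ (μ.colLen 0)) (μ.colLen 0)
      / PG (bfun μ (μ.colLen 0)) (μ.colLen 0) := by
  have h := hooks_VG μ
  have hH : (∏ x ∈ μ.cells, (hookLen μ x : ℚ)) ≠ 0 := by
    apply Finset.prod_ne_zero_iff.mpr
    intro i hi
    have := hookLen_pos ((YoungDiagram.mem_cells _).mp hi)
    positivity
  have hVG := VG_xq_ne_zero μ (μ.colLen 0)
  rw [dimPart, ← h]
  rw [mul_div_mul_right _ _ hVG]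

lemma pad_step (μ : YoungDiagram) (M : ℕ) (hM : μ.colLen 0 ≤ M) :
    VG (xq μ (M+1)) (M+1) / PG (bfun μ (M+1)) (M+1)
      = VG (xq μ M) M / PG (bfun μ M) M := by
  have hb : ∀ i < M, bfun μ (M+1) i = bfun μ M i + 1 := by
    intro i hi
    unfold bfun
    omega
  have hbM : bfun μ (M+1) M = 0 := by
    unfold bfun
    rw [rowLen_zero_of_le hM]
    omega
  have hVG : VG (xq μ (M+1)) (M+1) = VG (xq μ M) M * ∏ i ∈ Finset.range M,
      ((bfun μ M i : ℚ) + 1) := by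
    unfold VG
    rw [Finset.prod_range_succ]
    have hlast : ∏ j ∈ Finset.Ico (M+1) (M+1), (xq μ (M+1) M - xq μ (M+1) j) = 1 := by
      rw [Finset.Ico_self, Finset.prod_empty]
    rw [hlast, mul_one, ← Finset.prod_mul_distrib]
    refine Finset.prod_congr rfl fun i hi => ?_
    rw [Finset.mem_range] at hi
    rw [Finset.prod_Ico_succ_top (by omega)]
    congr 1
    · refine Finset.prod_congr rfl fun j hj => ?_
      rw [Finset.mem_Ico] at hj
      unfold xq
      rw [hb i hi, hb j hj.2]
      push_cast
      ring
    · unfold xq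
      rw [hb i hi, hbM]
      push_cast
      ring
  have hPG : PG (bfun μ (M+1)) (M+1) = PG (bfun μ M) M * ∏ i ∈ Finset.range M,
      ((bfun μ M i : ℚ) + 1) := by
    unfold PG
    rw [Finset.prod_range_succ, hbM]
    simp only [Nat.factorial_zero, Nat.cast_one, mul_one]
    rw [← Finset.prod_mul_distrib]
    refine Finset.prod_congr rfl fun i hi => ?_
    rw [Finset.mem_range] at hi
    rw [hb i hi, Nat.factorial_succ]
    push_cast
    ring
  have hc : (∏ i ∈ Finset.range M, ((bfun μ M i : ℚ) + 1)) ≠ 0 := by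
    apply Finset.prod_ne_zero_iff.mpr
    intro i _
    positivity
  rw [hVG, hPG, mul_div_mul_right _ _ hc]

lemma dimPart_eq_gen (μ : YoungDiagram) (M : ℕ) (hM : μ.colLen 0 ≤ M) :
    dimPart μ = (Nat.factorial μ.card : ℚ) * VG (xq μ M) M / PG (bfun μ M) M := by
  induction M, hM using Nat.le_induction with
  | base => exact dimPart_eq_base μ
  | succ M hM ih =>
    rw [ih, mul_div_assoc, mul_div_assoc, pad_step μ M hM]

lemma removable_iff {μ : YoungDiagram} {a c : ℕ} :
    Removable μ (a, c) ↔ (a, c) ∈ μ ∧ (a, c + 1) ∉ μ ∧ (a + 1, c) ∉ μ := by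
  constructor
  · rintro ⟨hmem, hlow⟩
    refine ⟨hmem, ?_, ?_⟩
    · intro hin
      have h1 : ((a, c+1) : ℕ × ℕ) ∈ (↑(μ.cells.erase (a,c)) : Set (ℕ × ℕ)) := by
        simp only [Finset.coe_erase, Set.mem_diff, Set.mem_singleton_iff]
        exact ⟨(YoungDiagram.mem_cells _).mpr hin, by simp⟩
      have h2 := hlow (show ((a,c) : ℕ × ℕ) ≤ (a, c+1) from ⟨le_refl _, by omega⟩) h1
      simp only [Finset.coe_erase, Set.mem_diff, Set.mem_singleton_iff] at h2
      exact h2.2 trivial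
    · intro hin
      have h1 : ((a+1, c) : ℕ × ℕ) ∈ (↑(μ.cells.erase (a,c)) : Set (ℕ × ℕ)) := by
        simp only [Finset.coe_erase, Set.mem_diff, Set.mem_singleton_iff]
        exact ⟨(YoungDiagram.mem_cells _).mpr hin, by simp⟩
      have h2 := hlow (show ((a,c) : ℕ × ℕ) ≤ (a+1, c) from ⟨by omega, le_refl _⟩) h1
      simp only [Finset.coe_erase, Set.mem_diff, Set.mem_singleton_iff] at h2
      exact h2.2 trivial
  · rintro ⟨hmem, hnr, hnd⟩
    refine ⟨hmem, ?_⟩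
    intro y z hzy hy
    simp only [Finset.coe_erase, Set.mem_diff, Set.mem_singleton_iff,
      YoungDiagram.mem_cells] at hy ⊢
    obtain ⟨hymem, hyne⟩ := hy
    refine ⟨μ.isLowerSet hzy hymem, ?_⟩
    rintro rfl
    obtain ⟨p, q⟩ := y
    obtain ⟨h1, h2⟩ := hzy
    simp only at h1 h2
    rcases Nat.lt_or_ge a p with hp | hp
    · exact hnd (μ.up_left_mem (by omega) h2 hymem)
    · have hap : a = p := by omega
      subst hap
      have : c < q := by
        rcases Nat.lt_or_ge c q with h | h
        · exact h
        · exact absurd (show ((a,q) : ℕ × ℕ) = (a,c) by rw [show q = c by omega]) hyne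
      exact hnr (μ.up_left_mem h1 (by omega) hymem)

lemma removable_iff' {μ : YoungDiagram} {a c : ℕ} :
    Removable μ (a, c) ↔ c + 1 = μ.rowLen a ∧ μ.rowLen (a + 1) < μ.rowLen a := by
  rw [removable_iff, YoungDiagram.mem_iff_lt_rowLen, YoungDiagram.mem_iff_lt_rowLen,
    YoungDiagram.mem_iff_lt_rowLen]
  constructor
  · rintro ⟨h1, h2, h3⟩
    omega
  · rintro ⟨h1, h2⟩
    omega

lemma yd_ext {μ ν : YoungDiagram} (h : μ.cells = ν.cells) : μ = ν := by
  cases μ; cases ν; simpa using h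

lemma rowLen_unique (μ : YoungDiagram) (i v : ℕ) (h : ∀ j, (i, j) ∈ μ ↔ j < v) :
    μ.rowLen i = v := by
  have h1 : ¬ (v < μ.rowLen i) := fun hc =>
    lt_irrefl v ((h v).mp (YoungDiagram.mem_iff_lt_rowLen.mpr hc))
  have h2 : ¬ (μ.rowLen i < v) := fun hc =>
    lt_irrefl (μ.rowLen i) (YoungDiagram.mem_iff_lt_rowLen.mp ((h (μ.rowLen i)).mpr hc))
  omega

/-- Branching rule for restriction: for a nonempty Young diagram `λ`,
`d_λ = Σ_{j ∈ B⁻(λ)} d_{λ ⊟ j}`. -/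
theorem dim_eq_sum_dim_remove (l : YoungDiagram) (hl : 0 < l.card)
    (S : Finset ℤ) (hS : ∀ i : ℤ, i ∈ S ↔ i ∈ Bminus l)
    (D : ℤ → YoungDiagram) (hD : ∀ j ∈ S, RemoveBox l j (D j)) :
    dimPart l = ∑ j ∈ S, dimPart (D j) := by
  classical
  set m := l.colLen 0 with hm
  have hm0 : 0 < m := by
    obtain ⟨⟨a, b⟩, hxx⟩ := Finset.card_pos.mp hl
    have h00 : (0, 0) ∈ l :=
      l.up_left_mem (Nat.zero_le a) (Nat.zero_le b) ((YoungDiagram.mem_cells _).mp hxx)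
    exact YoungDiagram.mem_iff_lt_colLen.mp h00
  set n := l.card with hn
  set bb : ℕ → ℕ := bfun l m with hbb
  set x : ℕ → ℚ := xq l m with hx
  have hxbb : ∀ r, x r = (bb r : ℚ) := fun r => rfl
  have hbbanti : ∀ i j : ℕ, i < j → j < m → bb j < bb i := by
    intro i j hij hj
    have := bfun_strictAnti (μ := l) (M := m) hij hj
    simpa [hbb] using this
  have hbbpos : ∀ r, r < m → 0 < bb r := by
    intro r hr
    have := rowLen_pos (hm ▸ hr)
    simp only [hbb, bfun]
    omega
  have hxinj : Set.InjOn x (Finset.range m) := by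
    intro i hi j hj hij
    rw [Finset.coe_range, Set.mem_Iio] at hi hj
    have hbij : bb i = bb j := by
      have : (bb i : ℚ) = (bb j : ℚ) := by rw [← hxbb i, ← hxbb j]; exact hij
      exact_mod_cast this
    rcases Nat.lt_trichotomy i j with hlt | he | hgt
    · have := hbbanti i j hlt hj; omega
    · exact he
    · have := hbbanti j i hgt hi; omega
  set g : ℕ → ℤ := fun r => (l.rowLen r : ℤ) - 1 - r with hg
  have hganti : ∀ p q : ℕ, p < q → g q < g p := by
    intro p q hpq
    have := l.rowLen_anti p q (le_of_lt hpq)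
    simp only [hg]
    omega
  have hginj : ∀ p q : ℕ, g p = g q → p = q := by
    intro p q hpq
    rcases Nat.lt_trichotomy p q with hlt | he | hgt
    · exact absurd hpq (ne_of_gt (hganti p q hlt))
    · exact he
    · exact absurd hpq (ne_of_lt (hganti q p hgt))
  set C : Finset ℕ := (Finset.range m).filter (fun r => l.rowLen (r + 1) < l.rowLen r)
    with hC
  have hSC : S = C.image g := by
    ext i
    rw [hS i]
    constructor
    · rintro ⟨⟨a, c⟩, hrem, hcont⟩
      have ham : a < m := by
        have hmem := hrem.1
        exact YoungDiagram.mem_iff_lt_colLen.mp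
          (l.up_left_mem (le_refl a) (Nat.zero_le c) hmem)
      obtain ⟨hc1, hc2⟩ := removable_iff'.mp hrem
      rw [Finset.mem_image]
      refine ⟨a, ?_, ?_⟩
      · rw [hC, Finset.mem_filter, Finset.mem_range]
        exact ⟨ham, hc2⟩
      · rw [← hcont]
        simp only [hg, _root_.content]
        omega
    · rw [Finset.mem_image]
      rintro ⟨r, hrC, rfl⟩
      rw [hC, Finset.mem_filter, Finset.mem_range] at hrC
      obtain ⟨hrm, hcorner⟩ := hrC
      have hrpos := rowLen_pos (hm ▸ hrm)
      refine ⟨(r, l.rowLen r - 1), removable_iff'.mpr ⟨by omega, hcorner⟩, ?_⟩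
      simp only [hg, _root_.content]
      omega
  have hginjC : Set.InjOn g (C : Set ℕ) := fun p _ q _ h => hginj p q h
  -- the key per-corner computation
  have key : ∀ a ∈ C, dimPart (D (g a))
      = (Nat.factorial (n - 1) : ℚ) * (x a * VG (Function.update x a (x a - 1)) m)
        / PG bb m := by
    intro a haC
    have haC' := haC
    rw [hC, Finset.mem_filter, Finset.mem_range] at haC'
    obtain ⟨ham, hcorner⟩ := haC'
    have hapos := rowLen_pos (hm ▸ ham)
    have hgaS : g a ∈ S := by
      rw [hSC]
      exact Finset.mem_image_of_mem g haC
    obtain ⟨⟨a', c'⟩, hzrem, hzcont, hzcells⟩ := hD (g a) hgaS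
    obtain ⟨hc'1, hc'2⟩ := removable_iff'.mp hzrem
    have haa : a' = a := by
      apply hginj
      rw [← hzcont]
      simp only [hg, _root_.content]
      omega
    rw [haa] at hzrem hzcells hc'1 hc'2
    have hc' : c' = l.rowLen a - 1 := by omega
    set μr : YoungDiagram := ⟨l.cells.erase (a, c'), hzrem.2⟩ with hμr
    have hDr : D (g a) = μr := yd_ext hzcells
    rw [hDr]
    have hmemr : ∀ p : ℕ × ℕ, p ∈ μr ↔ p ∈ l ∧ p ≠ (a, c') := by
      intro p
      constructor
      · intro hp
        have h1 : p ∈ l.cells.erase (a, c') := hp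
        rw [Finset.mem_erase] at h1
        exact ⟨(YoungDiagram.mem_cells _).mp h1.2, h1.1⟩
      · rintro ⟨h1, h2⟩
        apply (YoungDiagram.mem_cells _).mp
        show p ∈ l.cells.erase (a, c')
        rw [Finset.mem_erase]
        exact ⟨h2, (YoungDiagram.mem_cells _).mpr h1⟩
    have hrowr : ∀ i, μr.rowLen i = if i = a then l.rowLen a - 1 else l.rowLen i := by
      intro i
      apply rowLen_unique
      intro j
      rw [hmemr (i, j), YoungDiagram.mem_iff_lt_rowLen]
      by_cases hia : i = a
      · subst hia
        rw [if_pos rfl]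
        constructor
        · rintro ⟨hj, hne⟩
          have : j ≠ c' := fun hjc => hne (by rw [hjc])
          omega
        · intro hj
          refine ⟨by omega, fun hp => ?_⟩
          have : j = c' := congrArg Prod.snd hp
          omega
      · rw [if_neg hia]
        constructor
        · rintro ⟨hj, _⟩; exact hj
        · intro hj
          exact ⟨hj, fun hp => hia (congrArg Prod.fst hp)⟩
    have hcolr : μr.colLen 0 ≤ m := by
      by_contra hcon
      have h1 : (m, 0) ∈ μr := YoungDiagram.mem_iff_lt_colLen.mpr (by omega)
      have h2 := ((hmemr (m, 0)).mp h1).1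
      have h3 := YoungDiagram.mem_iff_lt_colLen.mp h2
      omega
    have hcardr : μr.card = n - 1 := by
      show (l.cells.erase (a, c')).card = n - 1
      rw [Finset.card_erase_of_mem ((YoungDiagram.mem_cells _).mpr hzrem.1)]
    rw [dimPart_eq_gen μr m hcolr, hcardr]
    have hbfr : ∀ i, i < m → bfun μr m i = Function.update bb a (bb a - 1) i := by
      intro i hi
      rw [Function.update_apply]
      have e1 := hrowr i
      have e2 : bb i = l.rowLen i + (m - 1 - i) := rfl
      have e3 : bb a = l.rowLen a + (m - 1 - a) := rfl
      show μr.rowLen i + (m - 1 - i) = _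
      by_cases hia : i = a
      · subst hia
        rw [if_pos rfl] at e1 ⊢
        omega
      · rw [if_neg hia] at e1 ⊢
        omega
    have hVg : VG (xq μr m) m = VG (Function.update x a (x a - 1)) m := by
      apply VG_congr
      intro i hi
      show ((bfun μr m i : ℕ) : ℚ) = _
      rw [hbfr i hi, Function.update_apply, Function.update_apply]
      by_cases hia : i = a
      · simp only [if_pos hia]
        rw [hxbb a, Nat.cast_sub (hbbpos a ham)]
        norm_num
      · simp only [if_neg hia]
        exact (hxbb i).symm
    have hPg : PG (bfun μr m) m * (bb a : ℚ) = PG bb m := by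
      have h1 : PG (bfun μr m) m = PG (Function.update bb a (bb a - 1)) m :=
        PG_congr hbfr
      rw [h1]
      unfold PG
      rw [← Finset.mul_prod_erase (Finset.range m)
          (fun i => ((Nat.factorial (Function.update bb a (bb a - 1) i) : ℕ) : ℚ))
          (Finset.mem_range.mpr ham),
        ← Finset.mul_prod_erase (Finset.range m)
          (fun i => ((Nat.factorial (bb i) : ℕ) : ℚ)) (Finset.mem_range.mpr ham)]
      have h2 : ∏ i ∈ (Finset.range m).erase a,
          ((Nat.factorial (Function.update bb a (bb a - 1) i) : ℕ) : ℚ)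
          = ∏ i ∈ (Finset.range m).erase a, ((Nat.factorial (bb i) : ℕ) : ℚ) := by
        refine Finset.prod_congr rfl fun i hi => ?_
        rw [Function.update_of_ne (Finset.mem_erase.mp hi).1]
      rw [h2]
      simp only [Function.update_self]
      have h3' : Nat.factorial (bb a - 1) * bb a = Nat.factorial (bb a) := by
        rw [mul_comm]; exact Nat.mul_factorial_pred (hbbpos a ham).ne'
      have h3 : (Nat.factorial (bb a - 1) : ℚ) * (bb a : ℚ)
          = (Nat.factorial (bb a) : ℚ) := by exact_mod_cast congrArg (Nat.cast (R := ℚ)) h3'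
      rw [← h3]
      ring
    have hbbne : (bb a : ℚ) ≠ 0 := by
      have := hbbpos a ham
      positivity
    rw [hVg, div_eq_div_iff (PG_ne_zero (bfun μr m) m) (PG_ne_zero bb m), ← hPg, hxbb a]
    ring
  -- sum over C and extension to range m
  rw [hSC, Finset.sum_image (fun p hp q hq h => hginjC hp hq h), Finset.sum_congr rfl key]
  have hCsub : C ⊆ Finset.range m := by
    rw [hC]; exact Finset.filter_subset _ _
  have hext : ∑ a ∈ C, (Nat.factorial (n - 1) : ℚ)
        * (x a * VG (Function.update x a (x a - 1)) m) / PG bb m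
      = ∑ a ∈ Finset.range m, (Nat.factorial (n - 1) : ℚ)
        * (x a * VG (Function.update x a (x a - 1)) m) / PG bb m := by
    apply Finset.sum_subset hCsub
    intro a ha haC
    rw [hC, Finset.mem_filter] at haC
    rw [Finset.mem_range] at ha
    have hnc : ¬ (l.rowLen (a + 1) < l.rowLen a) := fun hcon => haC ⟨Finset.mem_range.mpr ha, hcon⟩
    have heq : l.rowLen (a + 1) = l.rowLen a := by
      have := l.rowLen_anti a (a + 1) (by omega)
      omega
    have ham1 : a + 1 < m := by
      by_contra hcon
      have h0 : l.rowLen (a + 1) = 0 := rowLen_zero_of_le (by omega)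
      have := rowLen_pos (hm ▸ ha)
      omega
    have hbba : bb (a + 1) = bb a - 1 := by
      simp only [hbb, bfun, heq]
      omega
    have hy : Function.update x a (x a - 1) a = Function.update x a (x a - 1) (a + 1) := by
      rw [Function.update_self, Function.update_of_ne (by omega)]
      rw [hxbb (a + 1), hbba, Nat.cast_sub (hbbpos a ha), hxbb a]
      norm_num
    rw [VG_eq_zero _ m a (a + 1) (by omega) ham1 hy]
    ring
  rw [hext]
  -- apply the key identity
  have hsum : ∑ a ∈ Finset.range m, (Nat.factorial (n - 1) : ℚ)
        * (x a * VG (Function.update x a (x a - 1)) m) / PG bb m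
      = (Nat.factorial (n - 1) : ℚ)
        * ((∑ a ∈ Finset.range m, x a) - m * (m - 1) / 2) * VG x m / PG bb m := by
    rw [← Finset.sum_div, ← Finset.mul_sum, key_identity_VG m x hxinj]
    ring
  rw [hsum]
  -- sum of x equals n + m(m-1)/2
  have hgauss : (∑ r ∈ Finset.range m, bb r) * 2 = n * 2 + m * (m - 1) := by
    have h1 : ∑ r ∈ Finset.range m, bb r
        = (∑ r ∈ Finset.range m, l.rowLen r) + ∑ r ∈ Finset.range m, (m - 1 - r) := by
      simp only [hbb, bfun]
      rw [Finset.sum_add_distrib]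
    have h2 : ∑ r ∈ Finset.range m, (m - 1 - r) = ∑ r ∈ Finset.range m, r := by
      have := Finset.sum_range_reflect (fun r => r) m
      simpa using this
    have h3 : (∑ r ∈ Finset.range m, r) * 2 = m * (m - 1) := Finset.sum_range_id_mul_two m
    have h4 : n = ∑ r ∈ Finset.range m, l.rowLen r := by
      rw [hn, card_eq_sum_rowLen l, ← hm]
    omega
  have hsx : (∑ a ∈ Finset.range m, x a) - (m : ℚ) * (m - 1) / 2 = n := by
    have hc1 : ∑ a ∈ Finset.range m, x a = ((∑ r ∈ Finset.range m, bb r : ℕ) : ℚ) := by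
      rw [Nat.cast_sum]
      exact Finset.sum_congr rfl fun r _ => hxbb r
    have hc2 : ((∑ r ∈ Finset.range m, bb r : ℕ) : ℚ) * 2
        = (n : ℚ) * 2 + (m : ℚ) * ((m : ℚ) - 1) := by
      have hcg := congrArg (Nat.cast (R := ℚ)) hgauss
      push_cast [Nat.cast_sub (show 1 ≤ m from hm0)] at hcg
      exact_mod_cast hcg
    rw [hc1]
    linarith [hc2]
  rw [hsx]
  -- final
  rw [dimPart_eq_gen l m hm.ge, ← hx, ← hbb, ← hn]
  have hfac' : Nat.factorial (n - 1) * n = Nat.factorial n := by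
    rw [mul_comm]; exact Nat.mul_factorial_pred hl.ne'
  have hfac : (Nat.factorial (n - 1) : ℚ) * (n : ℚ) = (Nat.factorial n : ℚ) := by
    exact_mod_cast congrArg (Nat.cast (R := ℚ)) hfac'
  rw [← hfac]
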